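/- arXiv:2003.05360 — 2 statements merged into one kernel-verified Lean document; each statement's English description precedes it below -/
import Mathlib

section
/- Let θ ∈ ℝ and δ > 0. Define α : [1,∞) → (0,∞) by α(t) = t^{θ + δ·sin(log log t)} if t > e, and α(t) = t^θ if 1 ≤ t ≤ e. Then α belongs to OR, with lower Matuszewska index σ₀(α) = θ − √2·δ and upper Matuszewska index σ₁(α) = θ + √2·δ. -/
/-- The class OR of O-regularly varying functions: Borel measurable
`α : [1,∞) → (0,∞)` such that `c⁻¹ ≤ α (l * t) / α t ≤ c` for all `t ≥ 1`
and `l ∈ [1, b]`, for some `b > 1` and `c ≥ 1`. -/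
def IsOR (α : ℝ → ℝ) : Prop :=
  Measurable ((Set.Ici (1:ℝ)).restrict α) ∧ (∀ t, 1 ≤ t → 0 < α t) ∧
  ∃ b : ℝ, 1 < b ∧ ∃ c : ℝ, 1 ≤ c ∧ ∀ t, 1 ≤ t → ∀ l, 1 ≤ l → l ≤ b →
    c⁻¹ ≤ α (l * t) / α t ∧ α (l * t) / α t ≤ c

/-- The set of lower Matuszewska exponents. -/
def lowerMSet (α : ℝ → ℝ) : Set ℝ :=
  {r₀ | ∃ c₀ : ℝ, 0 < c₀ ∧ ∀ t, 1 ≤ t → ∀ l, 1 ≤ l → c₀ * l ^ r₀ ≤ α (l * t) / α t}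

/-- The set of upper Matuszewska exponents. -/
def upperMSet (α : ℝ → ℝ) : Set ℝ :=
  {r₁ | ∃ c₁ : ℝ, 0 < c₁ ∧ ∀ t, 1 ≤ t → ∀ l, 1 ≤ l → α (l * t) / α t ≤ c₁ * l ^ r₁}

/-- The lower Matuszewska index `σ₀(α)`. -/
noncomputable def sigma0 (α : ℝ → ℝ) : ℝ := sSup (lowerMSet α)

/-- The upper Matuszewska index `σ₁(α)`. -/
noncomputable def sigma1 (α : ℝ → ℝ) : ℝ := sInf (upperMSet α)

/-- The oscillating function `α(t) = t^{θ + δ sin(log log t)}` for `t > e`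
and `α(t) = t^θ` for `1 ≤ t ≤ e`. -/
noncomputable def alphaOsc1 (θ δ : ℝ) : ℝ → ℝ := fun t =>
  if Real.exp 1 < t then t ^ (θ + δ * Real.sin (Real.log (Real.log t)))
  else t ^ θ

open Real Set Filter Topology


lemma sincos_eq (x : ℝ) : Real.sin x + Real.cos x = Real.sqrt 2 * Real.cos (x - Real.pi/4) := by
  have h2 : Real.sqrt 2 ^ 2 = 2 := Real.sq_sqrt (by norm_num)
  rw [Real.cos_sub, Real.cos_pi_div_four, Real.sin_pi_div_four]
  linear_combination (-(Real.sin x + Real.cos x)/2) * h2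

lemma hasDerivAt_Q {u : ℝ} (hu : 0 < u) :
    HasDerivAt (fun u => u * Real.sin (Real.log u))
      (Real.sin (Real.log u) + Real.cos (Real.log u)) u := by
  have h1 : HasDerivAt (fun u : ℝ => Real.sin (Real.log u)) (Real.cos (Real.log u) * u⁻¹) u :=
    (Real.hasDerivAt_sin _).comp u (Real.hasDerivAt_log hu.ne')
  have h2 : HasDerivAt (fun u : ℝ => u * Real.sin (Real.log u))
      (1 * Real.sin (Real.log u) + u * (Real.cos (Real.log u) * u⁻¹)) u := (hasDerivAt_id u).mul h1
  convert h2 using 1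
  field_simp

lemma mvt_le {f f' : ℝ → ℝ} {a b M : ℝ} (hab : a ≤ b)
    (hf : ∀ x ∈ Set.Icc a b, HasDerivAt f (f' x) x)
    (hM : ∀ x ∈ Set.Icc a b, f' x ≤ M) : f b - f a ≤ M * (b - a) := by
  have hd : ∀ x ∈ Set.Icc a b, HasDerivAt (fun x => M * x - f x) (M - f' x) x := by
    intro x hx
    have h1 : HasDerivAt (fun x : ℝ => M * x) M x := by
      simpa using (hasDerivAt_id x).const_mul M
    exact h1.sub (hf x hx)
  have hmono : MonotoneOn (fun x => M * x - f x) (Set.Icc a b) := by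
    apply monotoneOn_of_deriv_nonneg (convex_Icc a b)
    · exact fun x hx => (hd x hx).continuousAt.continuousWithinAt
    · exact fun x hx => (hd x (interior_subset hx)).differentiableAt.differentiableWithinAt
    · intro x hx
      rw [(hd x (interior_subset hx)).deriv]
      have := hM x (interior_subset hx); linarith
  have := hmono (Set.left_mem_Icc.2 hab) (Set.right_mem_Icc.2 hab) hab
  simp only [] at this; linarith

lemma mvt_ge {f f' : ℝ → ℝ} {a b m : ℝ} (hab : a ≤ b)
    (hf : ∀ x ∈ Set.Icc a b, HasDerivAt f (f' x) x)
    (hm : ∀ x ∈ Set.Icc a b, m ≤ f' x) : m * (b - a) ≤ f b - f a := by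
  have := mvt_le (f := fun x => -f x) (f' := fun x => -f' x) (M := -m) hab
    (fun x hx => (hf x hx).neg) (fun x hx => by have := hm x hx; linarith)
  linarith

lemma Q_slope_le {u₁ u₂ M : ℝ} (h0 : 0 < u₁) (h12 : u₁ ≤ u₂)
    (hM : ∀ u ∈ Set.Icc u₁ u₂, Real.sin (Real.log u) + Real.cos (Real.log u) ≤ M) :
    u₂ * Real.sin (Real.log u₂) - u₁ * Real.sin (Real.log u₁) ≤ M * (u₂ - u₁) :=
  mvt_le h12 (fun x hx => hasDerivAt_Q (lt_of_lt_of_le h0 hx.1)) hM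

lemma Q_slope_ge {u₁ u₂ m : ℝ} (h0 : 0 < u₁) (h12 : u₁ ≤ u₂)
    (hm : ∀ u ∈ Set.Icc u₁ u₂, m ≤ Real.sin (Real.log u) + Real.cos (Real.log u)) :
    m * (u₂ - u₁) ≤ u₂ * Real.sin (Real.log u₂) - u₁ * Real.sin (Real.log u₁) :=
  mvt_ge h12 (fun x hx => hasDerivAt_Q (lt_of_lt_of_le h0 hx.1)) hm

lemma sincos_bd (x : ℝ) : |Real.sin x + Real.cos x| ≤ Real.sqrt 2 := by
  rw [sincos_eq, abs_mul, abs_of_nonneg (Real.sqrt_nonneg 2)]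
  nlinarith [Real.abs_cos_le_one (x - Real.pi/4), Real.sqrt_nonneg 2]

noncomputable def Gfun (θ δ : ℝ) : ℝ → ℝ := fun u =>
  if 1 < u then θ*u + δ*(u * Real.sin (Real.log u)) else θ*u

lemma alpha_eq (θ δ : ℝ) {u : ℝ} (hu : 0 ≤ u) :
    alphaOsc1 θ δ (Real.exp u) = Real.exp (Gfun θ δ u) := by
  unfold alphaOsc1 Gfun
  by_cases h : 1 < u
  · rw [if_pos (Real.exp_lt_exp.2 h), if_pos h,
      Real.rpow_def_of_pos (Real.exp_pos _), Real.log_exp]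
    congr 1; ring
  · rw [if_neg (by simpa using h), if_neg h,
      Real.rpow_def_of_pos (Real.exp_pos _), Real.log_exp, mul_comm]

lemma ratio_eq (θ δ : ℝ) {t l : ℝ} (ht : 1 ≤ t) (hl : 1 ≤ l) :
    alphaOsc1 θ δ (l * t) / alphaOsc1 θ δ t
      = Real.exp (Gfun θ δ (Real.log l + Real.log t) - Gfun θ δ (Real.log t)) := by
  have ht0 : (0:ℝ) < t := lt_of_lt_of_le one_pos ht
  have hl0 : (0:ℝ) < l := lt_of_lt_of_le one_pos hl
  have h1 : l * t = Real.exp (Real.log l + Real.log t) := by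
    rw [Real.exp_add, Real.exp_log hl0, Real.exp_log ht0]
  have A := alpha_eq θ δ (u := Real.log l + Real.log t)
    (add_nonneg (Real.log_nonneg hl) (Real.log_nonneg ht))
  have B := alpha_eq θ δ (u := Real.log t) (Real.log_nonneg ht)
  rw [Real.exp_log ht0] at B
  rw [← h1] at A
  rw [A, B, ← Real.exp_sub]

lemma G_diff_le (θ δ : ℝ) (hδ : 0 ≤ δ) {u₁ u₂ : ℝ} (h0 : 0 ≤ u₁) (h12 : u₁ ≤ u₂) :
    Gfun θ δ u₂ - Gfun θ δ u₁ ≤ (θ + Real.sqrt 2 * δ) * (u₂ - u₁) := by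
  have hs2 : (0:ℝ) ≤ Real.sqrt 2 := Real.sqrt_nonneg 2
  have key : ∀ a b : ℝ, 1 ≤ a → a ≤ b →
      b * Real.sin (Real.log b) - a * Real.sin (Real.log a) ≤ Real.sqrt 2 * (b - a) :=
    fun a b ha hab => Q_slope_le (lt_of_lt_of_le one_pos ha) hab
      (fun u _ => (abs_le.1 (sincos_bd (Real.log u))).2)
  unfold Gfun
  by_cases h2 : 1 < u₂
  · by_cases h1 : 1 < u₁
    · rw [if_pos h2, if_pos h1]
      have := key u₁ u₂ h1.le h12
      nlinarith [mul_le_mul_of_nonneg_left this hδ]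
    · rw [if_pos h2, if_neg h1]
      push_neg at h1
      have := key 1 u₂ le_rfl h2.le
      rw [Real.log_one, Real.sin_zero] at this
      have h3 : u₂ * Real.sin (Real.log u₂) ≤ Real.sqrt 2 * (u₂ - u₁) := by nlinarith
      nlinarith [mul_le_mul_of_nonneg_left h3 hδ]
  · rw [if_neg h2, if_neg (fun h : 1 < u₁ => h2 (lt_of_lt_of_le h h12))]
    nlinarith [mul_nonneg (mul_nonneg hs2 hδ) (sub_nonneg.2 h12)]

lemma G_diff_ge (θ δ : ℝ) (hδ : 0 ≤ δ) {u₁ u₂ : ℝ} (h0 : 0 ≤ u₁) (h12 : u₁ ≤ u₂) :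
    (θ - Real.sqrt 2 * δ) * (u₂ - u₁) ≤ Gfun θ δ u₂ - Gfun θ δ u₁ := by
  have hs2 : (0:ℝ) ≤ Real.sqrt 2 := Real.sqrt_nonneg 2
  have key : ∀ a b : ℝ, 1 ≤ a → a ≤ b →
      -Real.sqrt 2 * (b - a) ≤ b * Real.sin (Real.log b) - a * Real.sin (Real.log a) :=
    fun a b ha hab => Q_slope_ge (lt_of_lt_of_le one_pos ha) hab
      (fun u _ => by have := (abs_le.1 (sincos_bd (Real.log u))).1; linarith)
  unfold Gfun
  by_cases h2 : 1 < u₂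
  · by_cases h1 : 1 < u₁
    · rw [if_pos h2, if_pos h1]
      have := key u₁ u₂ h1.le h12
      nlinarith [mul_le_mul_of_nonneg_left this hδ]
    · rw [if_pos h2, if_neg h1]
      push_neg at h1
      have := key 1 u₂ le_rfl h2.le
      rw [Real.log_one, Real.sin_zero] at this
      have h3 : -(Real.sqrt 2 * (u₂ - u₁)) ≤ u₂ * Real.sin (Real.log u₂) := by nlinarith
      nlinarith [mul_le_mul_of_nonneg_left h3 hδ]
  · rw [if_neg h2, if_neg (fun h : 1 < u₁ => h2 (lt_of_lt_of_le h h12))]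
    nlinarith [mul_nonneg (mul_nonneg hs2 hδ) (sub_nonneg.2 h12)]

lemma ratio_bounds (θ δ : ℝ) (hδ : 0 ≤ δ) {t l : ℝ} (ht : 1 ≤ t) (hl : 1 ≤ l) :
    l ^ (θ - Real.sqrt 2 * δ) ≤ alphaOsc1 θ δ (l * t) / alphaOsc1 θ δ t ∧
    alphaOsc1 θ δ (l * t) / alphaOsc1 θ δ t ≤ l ^ (θ + Real.sqrt 2 * δ) := by
  have hl0 : (0:ℝ) < l := lt_of_lt_of_le one_pos hl
  have hlog : 0 ≤ Real.log l := Real.log_nonneg hl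
  have h12 : Real.log t ≤ Real.log l + Real.log t := by linarith
  have h0 : (0:ℝ) ≤ Real.log t := Real.log_nonneg ht
  have hle := G_diff_le θ δ hδ h0 h12
  have hge := G_diff_ge θ δ hδ h0 h12
  rw [ratio_eq θ δ ht hl, Real.rpow_def_of_pos hl0, Real.rpow_def_of_pos hl0]
  constructor <;> rw [Real.exp_le_exp] <;> nlinarith

lemma mem_lower (θ δ : ℝ) (hδ : 0 ≤ δ) : θ - Real.sqrt 2 * δ ∈ lowerMSet (alphaOsc1 θ δ) :=
  ⟨1, one_pos, fun t ht l hl => by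
    rw [one_mul]; exact (ratio_bounds θ δ hδ ht hl).1⟩

lemma mem_upper (θ δ : ℝ) (hδ : 0 ≤ δ) : θ + Real.sqrt 2 * δ ∈ upperMSet (alphaOsc1 θ δ) :=
  ⟨1, one_pos, fun t ht l hl => by
    rw [one_mul]; exact (ratio_bounds θ δ hδ ht hl).2⟩

lemma alpha_pos (θ δ : ℝ) : ∀ t, 1 ≤ t → 0 < alphaOsc1 θ δ t := by
  intro t ht
  have : (0:ℝ) < t := lt_of_lt_of_le one_pos ht
  unfold alphaOsc1
  split <;> exact Real.rpow_pos_of_pos this _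

lemma alpha_meas (θ δ : ℝ) : Measurable ((Set.Ici (1:ℝ)).restrict (alphaOsc1 θ δ)) := by
  have hG : Measurable (Gfun θ δ) := by
    unfold Gfun
    apply Measurable.ite
    · exact measurableSet_Ioi
    · exact (measurable_id.const_mul θ).add
        ((measurable_id.mul (Real.measurable_sin.comp Real.measurable_log)).const_mul δ)
    · exact measurable_id.const_mul θ
  have hF : Measurable (fun t : ℝ => Real.exp (Gfun θ δ (Real.log t))) :=
    Real.measurable_exp.comp (hG.comp Real.measurable_log)
  have heq : (Set.Ici (1:ℝ)).restrict (alphaOsc1 θ δ)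
      = fun x : Set.Ici (1:ℝ) => Real.exp (Gfun θ δ (Real.log x.1)) := by
    funext x
    have hx : (1:ℝ) ≤ x.1 := x.2
    have hx0 : (0:ℝ) < x.1 := lt_of_lt_of_le one_pos hx
    have := alpha_eq θ δ (u := Real.log x.1) (Real.log_nonneg hx)
    rw [Real.exp_log hx0] at this
    exact this
  rw [heq]
  exact hF.comp measurable_subtype_coe

lemma alpha_isOR (θ δ : ℝ) (hδ : 0 ≤ δ) : IsOR (alphaOsc1 θ δ) := by
  refine ⟨alpha_meas θ δ, alpha_pos θ δ, 2, one_lt_two,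
    Real.exp (|θ| + Real.sqrt 2 * δ), Real.one_le_exp (by positivity), ?_⟩
  intro t ht l hl hl2
  have hb := ratio_bounds θ δ hδ ht hl
  have hl0 : (0:ℝ) < l := lt_of_lt_of_le one_pos hl
  have hs0 : 0 ≤ Real.log l := Real.log_nonneg hl
  have hs1 : Real.log l ≤ 1 := by
    have := Real.log_le_log hl0 hl2
    have h2 : Real.log 2 < 0.6931471808 := Real.log_two_lt_d9
    linarith
  have habs1 : θ * Real.log l ≤ |θ| := by
    nlinarith [le_abs_self θ, abs_nonneg θ]
  have habs2 : -|θ| ≤ θ * Real.log l := by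
    nlinarith [neg_abs_le θ, abs_nonneg θ]
  have hs2 : (0:ℝ) ≤ Real.sqrt 2 := Real.sqrt_nonneg 2
  rw [Real.rpow_def_of_pos hl0, Real.rpow_def_of_pos hl0] at hb
  constructor
  · rw [← Real.exp_neg]
    refine le_trans (Real.exp_le_exp.2 ?_) hb.1
    nlinarith [mul_nonneg (mul_nonneg hs2 hδ) hs0,
      mul_le_mul_of_nonneg_left hs1 (mul_nonneg hs2 hδ)]
  · refine le_trans hb.2 (Real.exp_le_exp.2 ?_)
    nlinarith [mul_nonneg (mul_nonneg hs2 hδ) hs0,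
      mul_le_mul_of_nonneg_left hs1 (mul_nonneg hs2 hδ)]

lemma lower_sharp (θ δ : ℝ) (hδ : 0 < δ) {r : ℝ} (hr : r ∈ lowerMSet (alphaOsc1 θ δ)) :
    r ≤ θ - Real.sqrt 2 * δ := by
  obtain ⟨c₀, hc₀, H⟩ := hr
  have hπ : (3:ℝ) < π := Real.pi_gt_three
  have hs2 : (0:ℝ) ≤ Real.sqrt 2 := Real.sqrt_nonneg 2
  have step : ∀ ε ∈ Set.Ioo (0:ℝ) 1, r ≤ θ - Real.sqrt 2 * δ * Real.cos ε := by
    rintro ε ⟨hε0, hε1⟩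
    have hCpos : (0:ℝ) < Real.exp (5*π/4 + ε) - Real.exp (5*π/4 - ε) := by
      rw [sub_pos]
      exact Real.exp_lt_exp.2 (by linarith)
    set M : ℝ := θ - Real.sqrt 2 * δ * Real.cos ε with hM
    set C : ℝ := Real.exp (5*π/4 + ε) - Real.exp (5*π/4 - ε) with hCdef
    have key : ∀ n : ℕ, r ≤ M - Real.log c₀ / (C * Real.exp (2*π*n)) := by
      intro n
      set w : ℝ := 2*π*(n:ℝ) with hw
      have hw0 : (0:ℝ) ≤ w := by positivity
      have hab : 5*π/4 - ε + w < 5*π/4 + ε + w := by linarith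
      have ha0 : (0:ℝ) < 5*π/4 - ε + w := by linarith
      set u₁ : ℝ := Real.exp (5*π/4 - ε + w) with hu₁
      set u₂ : ℝ := Real.exp (5*π/4 + ε + w) with hu₂
      have hu₁pos : 0 < u₁ := Real.exp_pos _
      have hu₁one : 1 < u₁ := by
        rw [hu₁, ← Real.exp_zero]
        exact Real.exp_lt_exp.2 ha0
      have hu12 : u₁ < u₂ := Real.exp_lt_exp.2 hab
      have hspos : 0 < u₂ - u₁ := sub_pos.2 hu12
      have hlog₁ : Real.log u₁ = 5*π/4 - ε + w := by rw [hu₁, Real.log_exp]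
      have hlog₂ : Real.log u₂ = 5*π/4 + ε + w := by rw [hu₂, Real.log_exp]
      have hseq : u₂ - u₁ = C * Real.exp w := by
        rw [hu₂, hu₁, hCdef]; simp only [Real.exp_add, Real.exp_sub]; ring
      clear_value u₁ u₂
      -- the slope bound
      have hslope : u₂ * Real.sin (Real.log u₂) - u₁ * Real.sin (Real.log u₁)
          ≤ (-(Real.sqrt 2 * Real.cos ε)) * (u₂ - u₁) := by
        apply Q_slope_le hu₁pos hu12.le
        intro u hu
        have hupos : 0 < u := lt_of_lt_of_le hu₁pos hu.1
        have hla : 5*π/4 - ε + w ≤ Real.log u := by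
          rw [← hlog₁]
          exact Real.log_le_log hu₁pos hu.1
        have hlb : Real.log u ≤ 5*π/4 + ε + w := by
          rw [← hlog₂]
          exact Real.log_le_log hupos hu.2
        set x : ℝ := Real.log u - 5*π/4 - w with hx
        have hxe : |x| ≤ ε := abs_le.2 ⟨by rw [hx]; linarith, by rw [hx]; linarith⟩
        have hcx : Real.cos (Real.log u - π/4) = -Real.cos x := by
          have h5 : Real.log u - π/4 = (x + π) + (n:ℝ) * (2*π) := by
            rw [hx, hw]; ring
          rw [h5, Real.cos_add_nat_mul_two_pi, Real.cos_add_pi]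
        have hce : Real.cos ε ≤ Real.cos x := by
          rw [← Real.cos_abs x]
          exact Real.cos_le_cos_of_nonneg_of_le_pi (abs_nonneg x) (by linarith) hxe
        rw [sincos_eq, hcx]
        nlinarith
      -- apply the hypothesis H
      have ht : (1:ℝ) ≤ Real.exp u₁ := Real.one_le_exp hu₁pos.le
      have hl : (1:ℝ) ≤ Real.exp (u₂ - u₁) := Real.one_le_exp hspos.le
      have hH := H (Real.exp u₁) ht (Real.exp (u₂ - u₁)) hl
      have hlt : Real.exp (u₂ - u₁) * Real.exp u₁ = Real.exp u₂ := by
        rw [← Real.exp_add]; ring_nf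
      rw [hlt, alpha_eq θ δ (le_of_lt (lt_trans hu₁pos hu12)),
        alpha_eq θ δ hu₁pos.le, ← Real.exp_sub,
        Real.rpow_def_of_pos (Real.exp_pos _), Real.log_exp] at hH
      -- compute G values
      have hGu₂ : Gfun θ δ u₂ = θ*u₂ + δ*(u₂ * Real.sin (Real.log u₂)) :=
        if_pos (lt_trans hu₁one hu12)
      have hGu₁ : Gfun θ δ u₁ = θ*u₁ + δ*(u₁ * Real.sin (Real.log u₁)) := if_pos hu₁one
      have hGdiff : Gfun θ δ u₂ - Gfun θ δ u₁ ≤ M * (u₂ - u₁) := by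
        rw [hGu₂, hGu₁, hM]
        nlinarith [mul_le_mul_of_nonneg_left hslope hδ.le]
      have hfin : c₀ * Real.exp ((u₂ - u₁) * r) ≤ Real.exp (M * (u₂ - u₁)) :=
        le_trans hH (Real.exp_le_exp.2 hGdiff)
      have hlog := Real.log_le_log (by positivity) hfin
      rw [Real.log_mul hc₀.ne' (Real.exp_ne_zero _), Real.log_exp, Real.log_exp] at hlog
      rw [← hseq]
      have hexpand : (M - r) * (u₂ - u₁) = M * (u₂ - u₁) - (u₂ - u₁) * r := by ring
      have hdiv : Real.log c₀ / (u₂ - u₁) ≤ M - r :=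
        (div_le_iff₀ hspos).2 (by rw [hexpand]; linarith)
      linarith
    -- take n → ∞
    have h1 : Tendsto (fun n : ℕ => 2*π*(n:ℝ)) atTop atTop :=
      Tendsto.const_mul_atTop (by positivity) tendsto_natCast_atTop_atTop
    have h2 : Tendsto (fun n : ℕ => C * Real.exp (2*π*(n:ℝ))) atTop atTop :=
      (Real.tendsto_exp_atTop.comp h1).const_mul_atTop hCpos
    have h3 : Tendsto (fun n : ℕ => Real.log c₀ / (C * Real.exp (2*π*(n:ℝ)))) atTop (𝓝 0) :=
      Tendsto.div_atTop tendsto_const_nhds h2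
    have h4 : Tendsto (fun n : ℕ => M - Real.log c₀ / (C * Real.exp (2*π*(n:ℝ)))) atTop (𝓝 M) := by
      have h5 := Tendsto.sub (tendsto_const_nhds :
        Tendsto (fun _ : ℕ => M) atTop (𝓝 M)) h3
      rwa [sub_zero] at h5
    exact ge_of_tendsto' h4 key
  have hlim : Tendsto (fun ε : ℝ => θ - Real.sqrt 2 * δ * Real.cos ε) (𝓝[>] (0:ℝ))
      (𝓝 (θ - Real.sqrt 2 * δ)) := by
    have hc : Tendsto (fun ε : ℝ => θ - Real.sqrt 2 * δ * Real.cos ε) (𝓝 (0:ℝ))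
        (𝓝 (θ - Real.sqrt 2 * δ * Real.cos 0)) :=
      Continuous.tendsto (by continuity) 0
    rw [Real.cos_zero, mul_one] at hc
    exact hc.mono_left nhdsWithin_le_nhds
  exact ge_of_tendsto hlim (eventually_of_mem (Ioo_mem_nhdsGT one_pos) step)

lemma upper_sharp (θ δ : ℝ) (hδ : 0 < δ) {r : ℝ} (hr : r ∈ upperMSet (alphaOsc1 θ δ)) :
    θ + Real.sqrt 2 * δ ≤ r := by
  obtain ⟨c₁, hc₁, H⟩ := hr
  have hπ : (3:ℝ) < π := Real.pi_gt_three
  have hs2 : (0:ℝ) ≤ Real.sqrt 2 := Real.sqrt_nonneg 2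
  have step : ∀ ε ∈ Set.Ioo (0:ℝ) (1/2), θ + Real.sqrt 2 * δ * Real.cos ε ≤ r := by
    rintro ε ⟨hε0, hε1⟩
    have hCpos : (0:ℝ) < Real.exp (π/4 + ε) - Real.exp (π/4 - ε) := by
      rw [sub_pos]
      exact Real.exp_lt_exp.2 (by linarith)
    set M : ℝ := θ + Real.sqrt 2 * δ * Real.cos ε with hM
    set C : ℝ := Real.exp (π/4 + ε) - Real.exp (π/4 - ε) with hCdef
    have key : ∀ n : ℕ, M - Real.log c₁ / (C * Real.exp (2*π*n)) ≤ r := by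
      intro n
      set w : ℝ := 2*π*(n:ℝ) with hw
      have hw0 : (0:ℝ) ≤ w := by positivity
      have hab : π/4 - ε + w < π/4 + ε + w := by linarith
      have ha0 : (0:ℝ) < π/4 - ε + w := by linarith
      set u₁ : ℝ := Real.exp (π/4 - ε + w) with hu₁
      set u₂ : ℝ := Real.exp (π/4 + ε + w) with hu₂
      have hu₁pos : 0 < u₁ := Real.exp_pos _
      have hu₁one : 1 < u₁ := by
        rw [hu₁, ← Real.exp_zero]
        exact Real.exp_lt_exp.2 ha0
      have hu12 : u₁ < u₂ := Real.exp_lt_exp.2 hab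
      have hspos : 0 < u₂ - u₁ := sub_pos.2 hu12
      have hlog₁ : Real.log u₁ = π/4 - ε + w := by rw [hu₁, Real.log_exp]
      have hlog₂ : Real.log u₂ = π/4 + ε + w := by rw [hu₂, Real.log_exp]
      have hseq : u₂ - u₁ = C * Real.exp w := by
        rw [hu₂, hu₁, hCdef]; simp only [Real.exp_add, Real.exp_sub]; ring
      clear_value u₁ u₂
      have hslope : (Real.sqrt 2 * Real.cos ε) * (u₂ - u₁)
          ≤ u₂ * Real.sin (Real.log u₂) - u₁ * Real.sin (Real.log u₁) := by
        apply Q_slope_ge hu₁pos hu12.le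
        intro u hu
        have hupos : 0 < u := lt_of_lt_of_le hu₁pos hu.1
        have hla : π/4 - ε + w ≤ Real.log u := by
          rw [← hlog₁]
          exact Real.log_le_log hu₁pos hu.1
        have hlb : Real.log u ≤ π/4 + ε + w := by
          rw [← hlog₂]
          exact Real.log_le_log hupos hu.2
        set x : ℝ := Real.log u - π/4 - w with hx
        have hxe : |x| ≤ ε := abs_le.2 ⟨by rw [hx]; linarith, by rw [hx]; linarith⟩
        have hcx : Real.cos (Real.log u - π/4) = Real.cos x := by
          have h5 : Real.log u - π/4 = x + (n:ℝ) * (2*π) := by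
            rw [hx, hw]; ring
          rw [h5, Real.cos_add_nat_mul_two_pi]
        have hce : Real.cos ε ≤ Real.cos x := by
          rw [← Real.cos_abs x]
          exact Real.cos_le_cos_of_nonneg_of_le_pi (abs_nonneg x) (by linarith) hxe
        rw [sincos_eq, hcx]
        nlinarith
      have ht : (1:ℝ) ≤ Real.exp u₁ := Real.one_le_exp hu₁pos.le
      have hl : (1:ℝ) ≤ Real.exp (u₂ - u₁) := Real.one_le_exp hspos.le
      have hH := H (Real.exp u₁) ht (Real.exp (u₂ - u₁)) hl
      have hlt : Real.exp (u₂ - u₁) * Real.exp u₁ = Real.exp u₂ := by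
        rw [← Real.exp_add]; ring_nf
      rw [hlt, alpha_eq θ δ (le_of_lt (lt_trans hu₁pos hu12)),
        alpha_eq θ δ hu₁pos.le, ← Real.exp_sub,
        Real.rpow_def_of_pos (Real.exp_pos _), Real.log_exp] at hH
      have hGu₂ : Gfun θ δ u₂ = θ*u₂ + δ*(u₂ * Real.sin (Real.log u₂)) :=
        if_pos (lt_trans hu₁one hu12)
      have hGu₁ : Gfun θ δ u₁ = θ*u₁ + δ*(u₁ * Real.sin (Real.log u₁)) := if_pos hu₁one
      have hGdiff : M * (u₂ - u₁) ≤ Gfun θ δ u₂ - Gfun θ δ u₁ := by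
        rw [hGu₂, hGu₁, hM]
        nlinarith [mul_le_mul_of_nonneg_left hslope hδ.le]
      have hfin : Real.exp (M * (u₂ - u₁)) ≤ c₁ * Real.exp ((u₂ - u₁) * r) :=
        le_trans (Real.exp_le_exp.2 hGdiff) hH
      have hlog := Real.log_le_log (Real.exp_pos _) hfin
      rw [Real.log_mul hc₁.ne' (Real.exp_ne_zero _), Real.log_exp, Real.log_exp] at hlog
      rw [← hseq]
      have hexpand : (M - r) * (u₂ - u₁) = M * (u₂ - u₁) - (u₂ - u₁) * r := by ring
      have hdiv : M - r ≤ Real.log c₁ / (u₂ - u₁) :=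
        (le_div_iff₀ hspos).2 (by rw [hexpand]; linarith)
      linarith
    have h1 : Tendsto (fun n : ℕ => 2*π*(n:ℝ)) atTop atTop :=
      Tendsto.const_mul_atTop (by positivity) tendsto_natCast_atTop_atTop
    have h2 : Tendsto (fun n : ℕ => C * Real.exp (2*π*(n:ℝ))) atTop atTop :=
      (Real.tendsto_exp_atTop.comp h1).const_mul_atTop hCpos
    have h3 : Tendsto (fun n : ℕ => Real.log c₁ / (C * Real.exp (2*π*(n:ℝ)))) atTop (𝓝 0) :=
      Tendsto.div_atTop tendsto_const_nhds h2
    have h4 : Tendsto (fun n : ℕ => M - Real.log c₁ / (C * Real.exp (2*π*(n:ℝ)))) atTop (𝓝 M) := by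
      have h5 := Tendsto.sub (tendsto_const_nhds :
        Tendsto (fun _ : ℕ => M) atTop (𝓝 M)) h3
      rwa [sub_zero] at h5
    exact le_of_tendsto' h4 key
  have hlim : Tendsto (fun ε : ℝ => θ + Real.sqrt 2 * δ * Real.cos ε) (𝓝[>] (0:ℝ))
      (𝓝 (θ + Real.sqrt 2 * δ)) := by
    have hc : Tendsto (fun ε : ℝ => θ + Real.sqrt 2 * δ * Real.cos ε) (𝓝 (0:ℝ))
        (𝓝 (θ + Real.sqrt 2 * δ * Real.cos 0)) :=
      Continuous.tendsto (by continuity) 0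
    rw [Real.cos_zero, mul_one] at hc
    exact hc.mono_left nhdsWithin_le_nhds
  exact le_of_tendsto hlim (eventually_of_mem (Ioo_mem_nhdsGT (by norm_num)) step)

/-- For `θ ∈ ℝ` and `δ > 0`, the function `alphaOsc1 θ δ` belongs to OR
with `σ₀ = θ − √2·δ` and `σ₁ = θ + √2·δ`. -/
theorem stmt_7 (θ δ : ℝ) (hδ : 0 < δ) :
    IsOR (alphaOsc1 θ δ) ∧
    sigma0 (alphaOsc1 θ δ) = θ - Real.sqrt 2 * δ ∧
    sigma1 (alphaOsc1 θ δ) = θ + Real.sqrt 2 * δ := by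
  refine ⟨alpha_isOR θ δ hδ.le, ?_, ?_⟩
  · apply le_antisymm
    · exact csSup_le ⟨_, mem_lower θ δ hδ.le⟩ (fun r hr => lower_sharp θ δ hδ hr)
    · exact le_csSup ⟨θ - Real.sqrt 2 * δ, fun r hr => lower_sharp θ δ hδ hr⟩
        (mem_lower θ δ hδ.le)
  · apply le_antisymm
    · exact csInf_le ⟨θ + Real.sqrt 2 * δ, fun r hr => upper_sharp θ δ hδ hr⟩
        (mem_upper θ δ hδ.le)
    · exact le_csInf ⟨_, mem_upper θ δ hδ.le⟩ (fun r hr => upper_sharp θ δ hδ hr)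
end

section
/- Let n ≥ 1 be an integer, s ∈ ℝ, and α ∈ OR. Suppose there exists a constant c > 0 such that for every measurable function v : ℝⁿ → ℂ one has ∫_{ℝⁿ} α²(⟨ξ⟩)·|v(ξ)|² dξ ≤ c · sup_{k ≥ 0} ( 4^{sk} · ∫_{Q_k} |v(ξ)|² dξ ), with both sides interpreted in [0,∞]. Then ∫₁^∞ α²(t)/t^{2s+1} dt < ∞. -/
open MeasureTheory

/-- The smoothed norm `⟨ξ⟩ = (1 + |ξ|²)^{1/2}` on `ℝⁿ`. -/
noncomputable def smoothNorm {n : ℕ} (ξ : EuclideanSpace ℝ (Fin n)) : ℝ :=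
  Real.sqrt (1 + ‖ξ‖ ^ 2)

/-- The dyadic annuli `Q₀ = {|ξ| ≤ 1}` and `Q_k = {2^{k−1} < |ξ| ≤ 2ᵏ}` for `k ≥ 1`. -/
def dyadicAnnulus (n k : ℕ) : Set (EuclideanSpace ℝ (Fin n)) :=
  if k = 0 then {ξ | ‖ξ‖ ≤ 1}
  else {ξ | (2:ℝ) ^ (k - 1) < ‖ξ‖ ∧ ‖ξ‖ ≤ (2:ℝ) ^ k}


noncomputable def Nrm (m : ℕ) (x : Fin (m+1) → ℝ) : ℝ := Real.sqrt (∑ i, x i ^ 2)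

lemma Nrm_sq (m : ℕ) (x : Fin (m+1) → ℝ) : Nrm m x ^ 2 = ∑ i, x i ^ 2 :=
  Real.sq_sqrt (Finset.sum_nonneg fun i _ => sq_nonneg _)

lemma x0_le_Nrm (m : ℕ) (x : Fin (m+1) → ℝ) (h : 0 ≤ x 0) : x 0 ≤ Nrm m x := by
  rw [Nrm, show x 0 = Real.sqrt (x 0 ^ 2) from (Real.sqrt_sq h).symm]
  apply Real.sqrt_le_sqrt
  exact Finset.single_le_sum (fun i _ => sq_nonneg (x i)) (Finset.mem_univ 0)

lemma norm_eq_Nrm (m : ℕ) (ξ : EuclideanSpace ℝ (Fin (m+1))) :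
    ‖ξ‖ = Nrm m ((MeasurableEquiv.toLp 2 (Fin (m+1) → ℝ)).symm ξ) := by
  rw [EuclideanSpace.norm_eq, Nrm]
  congr 1
  refine Finset.sum_congr rfl fun i _ => ?_
  rw [Real.norm_eq_abs, sq_abs]
  rfl



lemma or_iter (α : ℝ → ℝ) (hpos : ∀ t, 1 ≤ t → 0 < α t) {b c : ℝ} (hb : 1 < b) (hc : 1 ≤ c)
    (h : ∀ t, 1 ≤ t → ∀ l, 1 ≤ l → l ≤ b → c⁻¹ ≤ α (l * t) / α t) :
    ∀ m : ℕ, ∀ t, 1 ≤ t → ∀ l, 1 ≤ l → l ≤ b ^ m → (c ^ m)⁻¹ ≤ α (l * t) / α t := by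
  have hc0 : (0:ℝ) < c := lt_of_lt_of_le one_pos hc
  intro m
  induction m with
  | zero =>
    intro t ht l hl hlb
    have : l = 1 := le_antisymm (by simpa using hlb) hl
    subst this
    simp [div_self (hpos t ht).ne']
  | succ m ih =>
    intro t ht l hl hlb
    by_cases hcase : l ≤ b ^ m
    · refine le_trans ?_ (ih t ht l hl hcase)
      apply inv_anti₀ (pow_pos hc0 m)
      calc c ^ m = c ^ m * 1 := (mul_one _).symm
        _ ≤ c ^ m * c := by nlinarith [pow_pos hc0 m]
        _ = c ^ (m+1) := (pow_succ c m).symm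
    · push_neg at hcase
      have hb0 : (0:ℝ) < b := lt_trans one_pos hb
      have hbm1 : (1:ℝ) ≤ b ^ m := one_le_pow₀ hb.le
      have hbm0 : (0:ℝ) < b ^ m := lt_of_lt_of_le one_pos hbm1
      have ht' : 1 ≤ b ^ m * t := one_le_mul_of_one_le_of_one_le hbm1 ht
      have hl1 : 1 ≤ l / b ^ m := (one_le_div hbm0).2 hcase.le
      have hl2 : l / b ^ m ≤ b := by
        rw [div_le_iff₀ hbm0]
        calc l ≤ b ^ (m+1) := hlb
          _ = b * b ^ m := by ring
      have h1 : c⁻¹ ≤ α ((l / b ^ m) * (b ^ m * t)) / α (b ^ m * t) := h _ ht' _ hl1 hl2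
      have h2 : (c ^ m)⁻¹ ≤ α (b ^ m * t) / α t := ih t ht (b ^ m) hbm1 le_rfl
      have harg : (l / b ^ m) * (b ^ m * t) = l * t := by field_simp
      rw [harg] at h1
      have hαt : 0 < α t := hpos t ht
      have hαbt : 0 < α (b ^ m * t) := hpos _ ht'
      have key : α (l * t) / α t = (α (l * t) / α (b ^ m * t)) * (α (b ^ m * t) / α t) :=
        (div_mul_div_cancel₀ hαbt.ne').symm
      rw [key, pow_succ, mul_inv]
      have h1' : (0:ℝ) ≤ c⁻¹ := by positivity
      have h2' : (0:ℝ) ≤ (c ^ m)⁻¹ := by positivity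
      calc (c ^ m)⁻¹ * c⁻¹ = c⁻¹ * (c ^ m)⁻¹ := by ring
        _ ≤ (α (l * t) / α (b ^ m * t)) * (α (b ^ m * t) / α t) := by
            apply mul_le_mul h1 h2 h2' (le_trans h1' h1)

lemma lintegral_pi_prod : ∀ (m : ℕ) (f : Fin m → ℝ → ENNReal), (∀ i, Measurable (f i)) →
    ∫⁻ x : Fin m → ℝ, ∏ i, f i (x i) = ∏ i, ∫⁻ t, f i t := by
  intro m
  induction m with
  | zero =>
    intro f _
    simp [lintegral_const, volume_pi]
  | succ m ih =>
    intro f hf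
    set e := MeasurableEquiv.piFinSuccAbove (fun _ : Fin (m+1) => ℝ) 0 with he
    set G : ℝ × (Fin m → ℝ) → ENNReal := fun p => f 0 p.1 * ∏ i, f (Fin.succ i) (p.2 i) with hG
    have hGm : Measurable G := by
      apply Measurable.mul
      · exact (hf 0).comp measurable_fst
      · exact Finset.measurable_prod _ fun i _ =>
          (hf (Fin.succ i)).comp ((measurable_pi_apply i).comp measurable_snd)
    have key : ∀ x : Fin (m+1) → ℝ, ∏ i, f i (x i) = G (e x) := by
      intro x
      rw [Fin.prod_univ_succ]
      simp [hG, he, MeasurableEquiv.piFinSuccAbove, Fin.succAbove_zero, Fin.tail]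
    calc ∫⁻ x : Fin (m+1) → ℝ, ∏ i, f i (x i) = ∫⁻ x, G (e x) := by
          simp_rw [key]
      _ = ∫⁻ p : ℝ × (Fin m → ℝ), G p := by
          exact (volume_preserving_piFinSuccAbove (fun _ : Fin (m+1) => ℝ) 0).lintegral_comp_emb
            (MeasurableEquiv.measurableEmbedding e) G
      _ = ∫⁻ a : ℝ, ∫⁻ b : Fin m → ℝ, G (a, b) := by
          rw [Measure.volume_eq_prod, lintegral_prod _ hGm.aemeasurable]
      _ = ∫⁻ a : ℝ, f 0 a * ∏ i, ∫⁻ t, f (Fin.succ i) t := by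
          congr 1; ext a
          have hmeas : Measurable fun b : Fin m → ℝ => ∏ i, f (Fin.succ i) (b i) :=
            Finset.measurable_prod _ fun i _ =>
              (hf (Fin.succ i)).comp (measurable_pi_apply i)
          have step : ∫⁻ b : Fin m → ℝ, f 0 a * ∏ i, f (Fin.succ i) (b i)
              = f 0 a * ∫⁻ b : Fin m → ℝ, ∏ i, f (Fin.succ i) (b i) :=
            lintegral_const_mul _ hmeas
          rw [show (fun b : Fin m → ℝ => G (a, b)) = fun b => f 0 a * ∏ i, f (Fin.succ i) (b i) from rfl,
            step, ih (fun i => f (Fin.succ i)) (fun i => hf (Fin.succ i))]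
      _ = (∫⁻ t, f 0 t) * ∏ i, ∫⁻ t, f (Fin.succ i) t := lintegral_mul_const _ (hf 0)
      _ = ∏ i, ∫⁻ t, f i t := (Fin.prod_univ_succ fun i => ∫⁻ t, f i t).symm

set_option maxHeartbeats 2000000 in
/-- If `α ∈ OR` and there is `c > 0` such that for every measurable
`v : ℝⁿ → ℂ` one has `∫ α²(⟨ξ⟩)|v|² ≤ c · sup_k (4^{sk} ∫_{Q_k} |v|²)` in `[0,∞]`,
then `∫₁^∞ α²(t)/t^{2s+1} dt < ∞`. -/
theorem stmt_13 (n : ℕ) (hn : 1 ≤ n) (s : ℝ) (α : ℝ → ℝ) (hα : IsOR α)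
    (c : ℝ) (hc : 0 < c)
    (hbound : ∀ v : EuclideanSpace ℝ (Fin n) → ℂ, Measurable v →
      (∫⁻ ξ, ENNReal.ofReal (α (smoothNorm ξ) ^ 2 * ‖v ξ‖ ^ 2)) ≤
        ENNReal.ofReal c *
          ⨆ k : ℕ, ENNReal.ofReal ((4:ℝ) ^ (s * (k:ℝ))) *
            ∫⁻ ξ in dyadicAnnulus n k, ENNReal.ofReal (‖v ξ‖ ^ 2)) :
    (∫⁻ t in Set.Ici (1:ℝ), ENNReal.ofReal (α t ^ 2 / t ^ (2 * s + 1))) < ⊤ := by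
  classical
  obtain ⟨m, rfl⟩ : ∃ m, n = m + 1 := ⟨n - 1, (Nat.succ_pred_eq_of_pos hn).symm⟩
  obtain ⟨hαmeas, hpos, b, hb, c₀, hc₀, hineq⟩ := hα
  -- iterated OR lower bound up to factor 2
  obtain ⟨mz, hmz⟩ : ∃ mz : ℕ, (2:ℝ) < b ^ mz := pow_unbounded_of_one_lt 2 hb
  set K : ℝ := (c₀ ^ mz)⁻¹ with hK
  have hK0 : 0 < K := by positivity
  have hOR : ∀ t, 1 ≤ t → ∀ l, 1 ≤ l → l ≤ 2 → K * α t ≤ α (l * t) := by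
    intro t ht l hl hl2
    have := or_iter α hpos hb hc₀ (fun t ht l hl hlb => (hineq t ht l hl hlb).1) mz t ht l hl
      (le_trans hl2 hmz.le)
    calc K * α t ≤ (α (l * t) / α t) * α t := by
          apply mul_le_mul_of_nonneg_right (this) (hpos t ht).le
      _ = α (l * t) := div_mul_cancel₀ _ (hpos t ht).ne'
  -- basic objects
  set δ : ℝ := ((m:ℝ) + 1)⁻¹ with hδdef
  have hδ0 : 0 < δ := by positivity
  have hmδ : (m:ℝ) * δ ^ 2 ≤ 1 := by
    rw [hδdef, inv_pow]
    rw [← div_eq_mul_inv, div_le_one (by positivity)]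
    nlinarith [Nat.cast_nonneg (α := ℝ) m]
  set p : ℝ := -(s + 1/2) with hp
  set w : ℝ → ℝ := fun t => if 1 < t then t ^ p else 0 with hw
  have hwmeas : Measurable w := by
    have : w = fun t => if 1 < t then Real.exp (Real.log t * p) else 0 := by
      funext t
      rw [hw]; dsimp only; split_ifs with h
      · exact Real.rpow_def_of_pos (by linarith) p
      · rfl
    rw [this]
    exact Measurable.ite measurableSet_Ioi
      (Real.measurable_exp.comp (Real.measurable_log.mul_const p)) measurable_const
  have hwnn : ∀ t, 0 ≤ w t := by
    intro t; rw [hw]; dsimp only; split_ifs with h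
    · exact Real.rpow_nonneg (by linarith) p
    · exact le_refl 0
  set u : Fin (m+1) → ℝ → ℝ := fun i t => if i = 0 then w t else (if |t| ≤ δ then 1 else 0)
    with hu
  have humeas : ∀ i, Measurable (u i) := by
    intro i
    rw [hu]; dsimp only
    split_ifs with h
    · exact hwmeas
    · exact Measurable.ite ((isClosed_le continuous_abs continuous_const).measurableSet)
        measurable_const measurable_const
  have hunn : ∀ i t, 0 ≤ u i t := by
    intro i t; rw [hu]; dsimp only
    split_ifs <;> first | exact hwnn t | norm_num
  set g : (Fin (m+1) → ℝ) → ℝ := fun x => ∏ i, u i (x i) with hg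
  have hgmeas : Measurable g :=
    Finset.measurable_prod _ fun i _ => (humeas i).comp (measurable_pi_apply i)
  have hgnn : ∀ x, 0 ≤ g x := fun x => Finset.prod_nonneg fun i _ => hunn i (x i)
  set E := (MeasurableEquiv.toLp 2 (Fin (m+1) → ℝ)).symm with hE
  set v : EuclideanSpace ℝ (Fin (m+1)) → ℂ := fun ξ => ((g (E ξ) : ℝ) : ℂ) with hv
  have hvmeas : Measurable v := Complex.measurable_ofReal.comp (hgmeas.comp E.measurable)
  -- measurable version of α
  set αm : ℝ → ℝ := fun t => (Set.Ici (1:ℝ)).restrict α ⟨max t 1, le_max_right t 1⟩ with hαm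
  have hαmm : Measurable αm :=
    hαmeas.comp ((measurable_id.max measurable_const).subtype_mk)
  have hαmeq : ∀ t, 1 ≤ t → αm t = α t := by
    intro t ht
    rw [hαm]; dsimp only [Set.restrict]
    show α (max t 1) = α t; rw [max_eq_left ht]
  -- pointwise product facts
  have hprod_succ : ∀ x : Fin (m+1) → ℝ, (∀ i : Fin m, |x (Fin.succ i)| ≤ δ) →
      g x = w (x 0) := by
    intro x hx
    rw [hg]; dsimp only
    rw [Fin.prod_univ_succ]
    have h1 : u 0 (x 0) = w (x 0) := by simp [hu]
    have h2 : ∀ i : Fin m, u (Fin.succ i) (x (Fin.succ i)) = 1 := by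
      intro i; rw [hu]; simp [Fin.succ_ne_zero i, hx i]
    rw [h1, Finset.prod_congr rfl (fun i _ => h2 i)]
    simp
  have hg_zero_x0 : ∀ x : Fin (m+1) → ℝ, ¬(1 < x 0) → g x = 0 := by
    intro x hx
    rw [hg]; dsimp only
    apply Finset.prod_eq_zero (Finset.mem_univ 0)
    simp [hu, hw, hx]
  have hg_zero_i : ∀ x : Fin (m+1) → ℝ, ∀ i : Fin m, ¬(|x (Fin.succ i)| ≤ δ) → g x = 0 := by
    intro x i hx
    rw [hg]; dsimp only
    apply Finset.prod_eq_zero (Finset.mem_univ (Fin.succ i))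
    simp [hu, Fin.succ_ne_zero i, hx]
  have hNsq_le : ∀ x : Fin (m+1) → ℝ, (∀ i : Fin m, |x (Fin.succ i)| ≤ δ) →
      Nrm m x ^ 2 ≤ x 0 ^ 2 + 1 := by
    intro x hx
    rw [Nrm_sq, Fin.sum_univ_succ]
    have hsum : ∑ i : Fin m, x (Fin.succ i) ^ 2 ≤ (m:ℝ) * δ ^ 2 := by
      calc ∑ i : Fin m, x (Fin.succ i) ^ 2 ≤ ∑ _i : Fin m, δ ^ 2 :=
            Finset.sum_le_sum (fun i _ => by
              have h := hx i
              calc x (Fin.succ i) ^ 2 = |x (Fin.succ i)| ^ 2 := (sq_abs _).symm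
                _ ≤ δ ^ 2 := by apply pow_le_pow_left₀ (abs_nonneg _) h)
        _ = (m:ℝ) * δ ^ 2 := by simp [Finset.sum_const, Finset.card_fin]
    linarith [hmδ]
  have hαS : ∀ x : Fin (m+1) → ℝ, 1 < x 0 → Nrm m x ^ 2 ≤ x 0 ^ 2 + 1 →
      K * α (x 0) ≤ α (Real.sqrt (1 + Nrm m x ^ 2)) := by
    intro x h0 hN
    set t := x 0 with hhtt
    set S := Real.sqrt (1 + Nrm m x ^ 2) with hS
    have ht1 : 1 ≤ t := h0.le
    have ht0 : 0 < t := lt_of_lt_of_le one_pos ht1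
    have htS : t ≤ S := by
      rw [hS, show t = Real.sqrt (t ^ 2) from (Real.sqrt_sq ht0.le).symm]
      apply Real.sqrt_le_sqrt
      have h2 : t ^ 2 ≤ Nrm m x ^ 2 := by
        rw [Nrm_sq]
        exact Finset.single_le_sum (fun i _ => sq_nonneg (x i)) (Finset.mem_univ 0)
      linarith
    have hS2 : S ≤ 2 * t := by
      rw [hS, show 2 * t = Real.sqrt ((2 * t) ^ 2) from (Real.sqrt_sq (by linarith)).symm]
      apply Real.sqrt_le_sqrt
      nlinarith
    have hfin := hOR t ht1 (S / t) ((one_le_div ht0).2 htS) (by rw [div_le_iff₀ ht0]; linarith)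
    rwa [div_mul_cancel₀ _ ht0.ne'] at hfin
  -- the product test functions on each axis (lower-bound version)
  set F : Fin (m+1) → ℝ → ENNReal := fun i t =>
    if i = 0 then ENNReal.ofReal ((K * (αm t * w t)) ^ 2) else ENNReal.ofReal (u i t ^ 2)
    with hF
  have hFmeas : ∀ i, Measurable (F i) := by
    intro i; rw [hF]; dsimp only
    split_ifs with h
    · exact ENNReal.measurable_ofReal.comp
        ((measurable_const.mul (hαmm.mul hwmeas)).pow_const 2)
    · exact ENNReal.measurable_ofReal.comp ((humeas i).pow_const 2)
  have hptwise : ∀ x : Fin (m+1) → ℝ,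
      ∏ i, F i (x i) ≤ ENNReal.ofReal (α (Real.sqrt (1 + Nrm m x ^ 2)) ^ 2 * g x ^ 2) := by
    intro x
    by_cases h0 : 1 < x 0
    · by_cases hrest : ∀ i : Fin m, |x (Fin.succ i)| ≤ δ
      · have hgx : g x = w (x 0) := hprod_succ x hrest
        have hK' : K * α (x 0) ≤ α (Real.sqrt (1 + Nrm m x ^ 2)) := hαS x h0 (hNsq_le x hrest)
        have hprodF : ∏ i, F i (x i) = ENNReal.ofReal ((K * (α (x 0) * w (x 0))) ^ 2) := by
          rw [Fin.prod_univ_succ]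
          have h1 : F 0 (x 0) = ENNReal.ofReal ((K * (α (x 0) * w (x 0))) ^ 2) := by
            rw [hF]; dsimp only; rw [if_pos rfl, hαmeq (x 0) h0.le]
          have h2 : ∀ i : Fin m, F (Fin.succ i) (x (Fin.succ i)) = 1 := by
            intro i; rw [hF, hu]; simp [Fin.succ_ne_zero i, hrest i]
          rw [h1, Finset.prod_congr rfl (fun i _ => h2 i)]
          simp
        rw [hprodF, hgx]
        apply ENNReal.ofReal_le_ofReal
        have hKα : 0 ≤ K * α (x 0) := mul_nonneg hK0.le (hpos _ h0.le).le
        calc (K * (α (x 0) * w (x 0))) ^ 2 = (K * α (x 0)) ^ 2 * w (x 0) ^ 2 := by ring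
          _ ≤ α (Real.sqrt (1 + Nrm m x ^ 2)) ^ 2 * w (x 0) ^ 2 := by
              apply mul_le_mul_of_nonneg_right _ (sq_nonneg _)
              apply pow_le_pow_left₀ hKα hK'
      · push_neg at hrest
        obtain ⟨i, hi⟩ := hrest
        have hzero : F (Fin.succ i) (x (Fin.succ i)) = 0 := by
          rw [hF, hu]; simp [Fin.succ_ne_zero i, not_le.mpr hi]
        rw [Finset.prod_eq_zero (Finset.mem_univ (Fin.succ i)) hzero]
        exact zero_le
    · have hzero : F 0 (x 0) = 0 := by
        rw [hF]; dsimp only; rw [if_pos rfl]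
        have hwt : w (x 0) = 0 := by rw [hw]; simp [h0]
        simp [hwt]
      rw [Finset.prod_eq_zero (Finset.mem_univ 0) hzero]
      exact zero_le
  have hF0int : ∫⁻ t, F 0 t = ENNReal.ofReal (K ^ 2) *
      ∫⁻ t in Set.Ici (1:ℝ), ENNReal.ofReal (α t ^ 2 / t ^ (2 * s + 1)) := by
    have heq : ∀ t : ℝ, F 0 t = (Set.Ioi (1:ℝ)).indicator
        (fun t => ENNReal.ofReal (K ^ 2) * ENNReal.ofReal (α t ^ 2 / t ^ (2 * s + 1))) t := by
      intro t
      rw [hF]; dsimp only; rw [if_pos rfl, Set.indicator_apply]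
      by_cases h : t ∈ Set.Ioi (1:ℝ)
      · rw [if_pos h]
        have ht : (1:ℝ) < t := h
        have ht0 : (0:ℝ) < t := by linarith
        have hwt : w t = t ^ p := by rw [hw]; simp [ht]
        have hsq : t ^ p * t ^ p = (t ^ (2 * s + 1))⁻¹ := by
          rw [← Real.rpow_add ht0, show p + p = -(2 * s + 1) by rw [hp]; ring,
            Real.rpow_neg ht0.le]
        rw [hαmeq t ht.le, hwt, ← ENNReal.ofReal_mul (by positivity : (0:ℝ) ≤ K ^ 2)]
        congr 1
        calc (K * (α t * t ^ p)) ^ 2 = K ^ 2 * (α t ^ 2 * (t ^ p * t ^ p)) := by ring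
          _ = K ^ 2 * (α t ^ 2 / t ^ (2 * s + 1)) := by rw [hsq, div_eq_mul_inv]
      · rw [if_neg h]
        have h1 : ¬ (1 < t) := h
        have hwt : w t = 0 := by rw [hw]; simp [h1]
        simp [hwt]
    simp_rw [heq]
    rw [lintegral_indicator measurableSet_Ioi,
      lintegral_const_mul' _ _ ENNReal.ofReal_ne_top]
    congr 1
    exact setLIntegral_congr Ioi_ae_eq_Ici
  set D : ENNReal := ENNReal.ofReal (2 * δ) with hD
  have hD0 : D ≠ 0 := by
    rw [hD]
    simp only [ne_eq, ENNReal.ofReal_eq_zero, not_le]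
    linarith
  have hDtop : D ≠ ⊤ := ENNReal.ofReal_ne_top
  have hFtail : ∀ i : Fin m, ∫⁻ t, F (Fin.succ i) t = D := by
    intro i
    have heq : ∀ t : ℝ, F (Fin.succ i) t
        = (Set.Icc (-δ) δ).indicator (fun _ => 1) t := by
      intro t
      rw [hF, hu]; dsimp only
      rw [if_neg (Fin.succ_ne_zero i), if_neg (Fin.succ_ne_zero i), Set.indicator_apply]
      by_cases h : |t| ≤ δ
      · have hmem : t ∈ Set.Icc (-δ) δ := by
          rw [Set.mem_Icc]; exact abs_le.mp h
        rw [if_pos hmem, if_pos h]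
        norm_num
      · have hmem : t ∉ Set.Icc (-δ) δ := by
          rw [Set.mem_Icc]; exact fun hx => h (abs_le.mpr hx)
        rw [if_neg hmem, if_neg h]
        norm_num
    simp_rw [heq]
    rw [lintegral_indicator measurableSet_Icc, setLIntegral_const, one_mul, Real.volume_Icc,
      hD]
    congr 1
    ring
  have hlow : ENNReal.ofReal (K ^ 2) *
      (∫⁻ t in Set.Ici (1:ℝ), ENNReal.ofReal (α t ^ 2 / t ^ (2 * s + 1))) * D ^ m ≤
      ∫⁻ ξ, ENNReal.ofReal (α (smoothNorm ξ) ^ 2 * ‖v ξ‖ ^ 2) := by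
    have htrans : ∫⁻ ξ, ENNReal.ofReal (α (smoothNorm ξ) ^ 2 * ‖v ξ‖ ^ 2)
        = ∫⁻ x : Fin (m+1) → ℝ,
            ENNReal.ofReal (α (Real.sqrt (1 + Nrm m x ^ 2)) ^ 2 * g x ^ 2) := by
      rw [← (EuclideanSpace.volume_preserving_symm_measurableEquiv_toLp
          (Fin (m+1))).lintegral_comp_emb (MeasurableEquiv.measurableEmbedding _)
          (fun x => ENNReal.ofReal (α (Real.sqrt (1 + Nrm m x ^ 2)) ^ 2 * g x ^ 2))]
      apply lintegral_congr
      intro ξ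
      rw [smoothNorm, norm_eq_Nrm m ξ]
      congr 2
      rw [hv]; dsimp only
      rw [Complex.norm_real, Real.norm_eq_abs, sq_abs]
    rw [htrans]
    calc ENNReal.ofReal (K ^ 2) *
        (∫⁻ t in Set.Ici (1:ℝ), ENNReal.ofReal (α t ^ 2 / t ^ (2 * s + 1))) * D ^ m
        = ∏ i, ∫⁻ t, F i t := by
          rw [Fin.prod_univ_succ, hF0int,
            Finset.prod_congr rfl (fun i _ => hFtail i), Finset.prod_const, Finset.card_fin]
      _ = ∫⁻ x : Fin (m+1) → ℝ, ∏ i, F i (x i) := (lintegral_pi_prod _ F hFmeas).symm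
      _ ≤ _ := lintegral_mono hptwise
  -- upper bound over annuli
  set q : ℝ := 2 * s + 1 with hq
  set C₀ : ℝ := max ((2 * Real.sqrt 2) ^ q) 1 with hC₀
  have hC₀1 : (1:ℝ) ≤ C₀ := le_max_right _ _
  have hC₀0 : (0:ℝ) < C₀ := lt_of_lt_of_le one_pos hC₀1
  have hQmeas : ∀ k, MeasurableSet (dyadicAnnulus (m+1) k) := by
    intro k
    rw [dyadicAnnulus]
    split_ifs with h
    · exact (isClosed_le continuous_norm continuous_const).measurableSet
    · rw [show {ξ : EuclideanSpace ℝ (Fin (m+1)) |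
          (2:ℝ) ^ (k - 1) < ‖ξ‖ ∧ ‖ξ‖ ≤ (2:ℝ) ^ k}
          = {ξ : EuclideanSpace ℝ (Fin (m+1)) | (2:ℝ) ^ (k - 1) < ‖ξ‖} ∩
            {ξ : EuclideanSpace ℝ (Fin (m+1)) | ‖ξ‖ ≤ (2:ℝ) ^ k} from rfl]
      exact ((isOpen_lt continuous_const continuous_norm).measurableSet).inter
        (isClosed_le continuous_norm continuous_const).measurableSet
  set Ak : ℕ → Set (Fin (m+1) → ℝ) := fun k =>
    if k = 0 then {x | Nrm m x ≤ 1}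
    else {x | (2:ℝ) ^ (k - 1) < Nrm m x ∧ Nrm m x ≤ (2:ℝ) ^ k} with hAk
  have hA : ∀ k (ξ : EuclideanSpace ℝ (Fin (m+1))),
      ξ ∈ dyadicAnnulus (m+1) k ↔ E ξ ∈ Ak k := by
    intro k ξ
    by_cases h : k = 0
    · simp [dyadicAnnulus, hAk, h, Set.mem_setOf_eq, norm_eq_Nrm m ξ, ← hE]
    · simp [dyadicAnnulus, hAk, h, Set.mem_setOf_eq, norm_eq_Nrm m ξ, ← hE]
  have hindic : ∀ k, ∫⁻ ξ in dyadicAnnulus (m+1) k, ENNReal.ofReal (‖v ξ‖ ^ 2)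
      = ∫⁻ x : Fin (m+1) → ℝ, (Ak k).indicator (fun x => ENNReal.ofReal (g x ^ 2)) x := by
    intro k
    rw [← lintegral_indicator (hQmeas k)]
    rw [← (EuclideanSpace.volume_preserving_symm_measurableEquiv_toLp
        (Fin (m+1))).lintegral_comp_emb (MeasurableEquiv.measurableEmbedding _)
        ((Ak k).indicator fun x => ENNReal.ofReal (g x ^ 2))]
    apply lintegral_congr
    intro ξ
    rw [Set.indicator_apply, Set.indicator_apply]
    have hval : ENNReal.ofReal (‖v ξ‖ ^ 2) = ENNReal.ofReal (g (E ξ) ^ 2) := by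
      rw [hv]; dsimp only
      rw [Complex.norm_real, Real.norm_eq_abs, sq_abs]
    by_cases hmem : ξ ∈ dyadicAnnulus (m+1) k
    · rw [if_pos hmem, if_pos ((hA k ξ).mp hmem)]
      exact hval
    · rw [if_neg hmem, if_neg (fun hx => hmem ((hA k ξ).mpr hx))]
  have hterm : ∀ k : ℕ, ENNReal.ofReal ((4:ℝ) ^ (s * (k:ℝ))) *
      ∫⁻ ξ in dyadicAnnulus (m+1) k, ENNReal.ofReal (‖v ξ‖ ^ 2)
      ≤ ENNReal.ofReal C₀ * D ^ m := by
    intro k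
    rw [hindic k]
    match k with
    | 0 =>
      have hzero0 : ∀ x : Fin (m+1) → ℝ,
          (Ak 0).indicator (fun x => ENNReal.ofReal (g x ^ 2)) x = 0 := by
        intro x
        rw [Set.indicator_apply]
        split_ifs with hx
        · have hx1 : Nrm m x ≤ 1 := by
            rw [hAk] at hx; simpa using hx
          have hgx : g x = 0 := by
            apply hg_zero_x0
            intro h0
            have := x0_le_Nrm m x (by linarith)
            linarith
          simp [hgx]
        · rfl
      simp only [hzero0]
      simp
    | (k' + 1) =>
      set R : ℝ := (2:ℝ) ^ (k' + 1) with hR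
      have hR0 : (0:ℝ) < R := by rw [hR]; positivity
      set Bk : ℝ := R ^ (-q) with hBk
      have hBk0 : (0:ℝ) ≤ Bk := Real.rpow_nonneg hR0.le _
      set H : Fin (m+1) → ℝ → ENNReal := fun i t =>
        if i = 0 then
          (Set.Ioc (0:ℝ) R).indicator (fun _ => ENNReal.ofReal (C₀ * Bk)) t
        else ENNReal.ofReal (u i t ^ 2) with hH
      have hHmeas : ∀ i, Measurable (H i) := by
        intro i; rw [hH]; dsimp only
        split_ifs with h
        · exact Measurable.indicator measurable_const measurableSet_Ioc
        · exact ENNReal.measurable_ofReal.comp ((humeas i).pow_const 2)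
      have hHpt : ∀ x : Fin (m+1) → ℝ,
          (Ak (k'+1)).indicator (fun x => ENNReal.ofReal (g x ^ 2)) x ≤ ∏ i, H i (x i) := by
        intro x
        rw [Set.indicator_apply]
        split_ifs with hx
        swap
        · exact zero_le
        have hxA : (2:ℝ) ^ k' < Nrm m x ∧ Nrm m x ≤ R := by
          rw [hAk] at hx
          simpa using hx
        by_cases h0 : 1 < x 0
        swap
        · simp [hg_zero_x0 x h0]
        by_cases hrest : ∀ i : Fin m, |x (Fin.succ i)| ≤ δ
        swap
        · push_neg at hrest
          obtain ⟨i, hi⟩ := hrest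
          simp [hg_zero_i x i (not_le.mpr hi)]
        -- good case
        have hgx : g x = w (x 0) := hprod_succ x hrest
        have hx00 : (0:ℝ) < x 0 := by linarith
        have hx0R : x 0 ≤ R := le_trans (x0_le_Nrm m x hx00.le) hxA.2
        have hprodH : ∏ i, H i (x i) = ENNReal.ofReal (C₀ * Bk) := by
          rw [Fin.prod_univ_succ]
          have h1 : H 0 (x 0) = ENNReal.ofReal (C₀ * Bk) := by
            rw [hH]; dsimp only; rw [if_pos rfl, Set.indicator_apply,
              if_pos (Set.mem_Ioc.mpr ⟨hx00, hx0R⟩)]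
          have h2 : ∀ i : Fin m, H (Fin.succ i) (x (Fin.succ i)) = 1 := by
            intro i; rw [hH, hu]; simp [Fin.succ_ne_zero i, hrest i]
          rw [h1, Finset.prod_congr rfl (fun i _ => h2 i)]
          simp
        rw [hprodH]
        apply ENNReal.ofReal_le_ofReal
        -- real inequality : w (x 0) ^ 2 = (x 0) ^ (-q) ≤ C₀ * Bk
        have hwx : w (x 0) = (x 0) ^ p := by rw [hw]; simp [h0]
        have hwsq : w (x 0) ^ 2 = (x 0) ^ (-q) := by
          rw [hwx, sq, ← Real.rpow_add hx00,
            show p + p = -q by rw [hp, hq]; ring]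
        rw [hgx, hwsq]
        -- lower bound for x 0
        have hNsq : Nrm m x ^ 2 ≤ x 0 ^ 2 + 1 := hNsq_le x hrest
        have hNlt : R ^ 2 / 4 < Nrm m x ^ 2 := by
          have h2k : ((2:ℝ) ^ k') ^ 2 = R ^ 2 / 4 := by
            rw [hR]; rw [pow_succ]; ring
          rw [← h2k]
          apply pow_lt_pow_left₀ hxA.1 (by positivity) (by norm_num)
        have hx0sq : R ^ 2 / 8 ≤ x 0 ^ 2 := by
          by_cases hR8 : R ^ 2 ≤ 8
          · nlinarith
          · nlinarith
        set a : ℝ := R / (2 * Real.sqrt 2) with ha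
        have hsqrt2 : (0:ℝ) < Real.sqrt 2 := Real.sqrt_pos.mpr (by norm_num)
        have ha0 : 0 < a := by rw [ha]; positivity
        have hasq : a ^ 2 = R ^ 2 / 8 := by
          rw [ha, div_pow, mul_pow, Real.sq_sqrt (by norm_num : (0:ℝ) ≤ 2)]
          norm_num
        have hax0 : a ≤ x 0 := by
          rw [show a = Real.sqrt (a ^ 2) from (Real.sqrt_sq ha0.le).symm,
            show x 0 = Real.sqrt (x 0 ^ 2) from (Real.sqrt_sq hx00.le).symm]
          apply Real.sqrt_le_sqrt
          rw [hasq]; exact hx0sq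
        rcases le_or_gt 0 q with hq0 | hq0
        · have h1 : (x 0) ^ (-q) ≤ a ^ (-q) :=
            Real.rpow_le_rpow_of_nonpos ha0 hax0 (by linarith)
          have h2 : a ^ (-q) = Bk * (2 * Real.sqrt 2) ^ q := by
            rw [ha, Real.div_rpow hR0.le (by positivity),
              Real.rpow_neg (by positivity : (0:ℝ) ≤ 2 * Real.sqrt 2), div_inv_eq_mul, hBk]
          calc (x 0) ^ (-q) ≤ a ^ (-q) := h1
            _ = Bk * (2 * Real.sqrt 2) ^ q := h2
            _ ≤ Bk * C₀ := by
                apply mul_le_mul_of_nonneg_left (le_max_left _ _) hBk0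
            _ = C₀ * Bk := mul_comm _ _
        · have h1 : (x 0) ^ (-q) ≤ R ^ (-q) :=
            Real.rpow_le_rpow hx00.le hx0R (by linarith)
          calc (x 0) ^ (-q) ≤ R ^ (-q) := h1
            _ = 1 * Bk := by rw [hBk, one_mul]
            _ ≤ C₀ * Bk := mul_le_mul_of_nonneg_right hC₀1 hBk0
      have hHint : ∫⁻ x : Fin (m+1) → ℝ, ∏ i, H i (x i)
          = ENNReal.ofReal (C₀ * Bk) * ENNReal.ofReal R * D ^ m := by
        rw [lintegral_pi_prod _ H hHmeas, Fin.prod_univ_succ]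
        have h1 : ∫⁻ t, H 0 t = ENNReal.ofReal (C₀ * Bk) * ENNReal.ofReal R := by
          have hH0 : H 0 = (Set.Ioc (0:ℝ) R).indicator (fun _ => ENNReal.ofReal (C₀ * Bk)) := by
            funext t; rw [hH]
            rfl
          rw [hH0, lintegral_indicator measurableSet_Ioc, setLIntegral_const, Real.volume_Ioc,
            sub_zero]
        have h2 : ∀ i : Fin m, ∫⁻ t, H (Fin.succ i) t = D := by
          intro i
          have hHF : H (Fin.succ i) = F (Fin.succ i) := by
            funext t
            rw [hH, hF]
            simp [Fin.succ_ne_zero i]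
          rw [hHF]
          exact hFtail i
        rw [h1, Finset.prod_congr rfl (fun i _ => h2 i), Finset.prod_const, Finset.card_fin]
      calc ENNReal.ofReal ((4:ℝ) ^ (s * ((k'+1:ℕ):ℝ))) *
            ∫⁻ x : Fin (m+1) → ℝ, (Ak (k'+1)).indicator (fun x => ENNReal.ofReal (g x ^ 2)) x
          ≤ ENNReal.ofReal ((4:ℝ) ^ (s * ((k'+1:ℕ):ℝ))) *
            (ENNReal.ofReal (C₀ * Bk) * ENNReal.ofReal R * D ^ m) := by
            rw [← hHint]
            exact mul_le_mul_right (lintegral_mono hHpt) _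
        _ = ENNReal.ofReal ((4:ℝ) ^ (s * ((k'+1:ℕ):ℝ)) * (C₀ * Bk) * R) * D ^ m := by
            have hnn1 : (0:ℝ) ≤ (4:ℝ) ^ (s * ((k'+1:ℕ):ℝ)) * (C₀ * Bk) :=
              mul_nonneg (Real.rpow_nonneg (by norm_num) _) (mul_nonneg hC₀0.le hBk0)
            have hnn2 : (0:ℝ) ≤ (4:ℝ) ^ (s * ((k'+1:ℕ):ℝ)) :=
              Real.rpow_nonneg (by norm_num) _
            rw [ENNReal.ofReal_mul hnn1, ENNReal.ofReal_mul hnn2]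
            ring
        _ = ENNReal.ofReal C₀ * D ^ m := by
            have h4 : (4:ℝ) = (2:ℝ) ^ (2:ℝ) := by
              have h : ((2:ℝ) ^ (2:ℝ)) = ((2:ℝ) ^ (2:ℕ)) := by
                rw [← Real.rpow_natCast (2:ℝ) 2]; norm_num
              rw [h]; norm_num
            have hRr : R = (2:ℝ) ^ (((k'+1:ℕ)):ℝ) := by
              rw [hR, Real.rpow_natCast]
            have hkey : (4:ℝ) ^ (s * ((k'+1:ℕ):ℝ)) * Bk * R = 1 := by
              rw [hBk, hRr, h4, ← Real.rpow_mul (by norm_num : (0:ℝ) ≤ 2),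
                ← Real.rpow_mul (by norm_num : (0:ℝ) ≤ 2),
                ← Real.rpow_add (by norm_num : (0:ℝ) < 2),
                ← Real.rpow_add (by norm_num : (0:ℝ) < 2)]
              rw [show 2 * (s * ((k'+1:ℕ):ℝ)) + ((k'+1:ℕ):ℝ) * -q + ((k'+1:ℕ):ℝ) = 0 by
                rw [hq]; ring]
              exact Real.rpow_zero 2
            have hreal : (4:ℝ) ^ (s * ((k'+1:ℕ):ℝ)) * (C₀ * Bk) * R = C₀ := by
              calc (4:ℝ) ^ (s * ((k'+1:ℕ):ℝ)) * (C₀ * Bk) * R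
                  = C₀ * ((4:ℝ) ^ (s * ((k'+1:ℕ):ℝ)) * Bk * R) := by ring
                _ = C₀ := by rw [hkey, mul_one]
            rw [hreal]
  -- conclusion
  have hsup : (⨆ k : ℕ, ENNReal.ofReal ((4:ℝ) ^ (s * (k:ℝ))) *
      ∫⁻ ξ in dyadicAnnulus (m+1) k, ENNReal.ofReal (‖v ξ‖ ^ 2))
      ≤ ENNReal.ofReal C₀ * D ^ m := iSup_le hterm
  have hmain := (hbound v hvmeas).trans (mul_le_mul_right hsup _)
  have hchain := hlow.trans hmain
  by_contra hT
  rw [not_lt, top_le_iff] at hT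
  rw [hT] at hchain
  have h1 : ENNReal.ofReal (K ^ 2) * (⊤:ENNReal) * D ^ m = ⊤ := by
    rw [ENNReal.mul_top (by
      simp only [ne_eq, ENNReal.ofReal_eq_zero, not_le]
      positivity), ENNReal.top_mul (pow_ne_zero m hD0)]
  rw [h1] at hchain
  have h2 : ENNReal.ofReal c * (ENNReal.ofReal C₀ * D ^ m) ≠ ⊤ :=
    ENNReal.mul_ne_top ENNReal.ofReal_ne_top
      (ENNReal.mul_ne_top ENNReal.ofReal_ne_top (ENNReal.pow_ne_top hDtop))
  exact h2 (top_le_iff.mp hchain)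
end
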